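/- Let Ω ⊂ ℝⁿ be compact convex, σ: Ω → ℝ continuous and positive, and p₁,…,p_k distinct. For h in H = { h : vol(W_i(h)∩Ω) > 0 ∀i }, the function E(h) = ∫_Ω u_h(x) σ(x) dx is C¹ with ∂E/∂h_i = ∫_{W_i(h)∩Ω} σ(x) dx. -/

import Mathlib

open MeasureTheory
open scoped RealInnerProductSpace
open Filter Topology

variable {n : ℕ}

lemma hyperplane_null (a : EuclideanSpace ℝ (Fin n)) (ha : a ≠ 0) (c : ℝ) :
    volume {x : EuclideanSpace ℝ (Fin n) | ⟪x, a⟫ = c} = 0 := by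
  have hAA : ⟪a, a⟫ ≠ (0 : ℝ) := inner_self_ne_zero.2 ha
  set x₀ : EuclideanSpace ℝ (Fin n) := (c / ⟪a, a⟫) • a with hx₀def
  have hx₀ : ⟪a, x₀⟫ = c := by
    rw [real_inner_comm, hx₀def, real_inner_smul_left]
    exact div_mul_cancel₀ c hAA
  have hset : {x : EuclideanSpace ℝ (Fin n) | ⟪x, a⟫ = c}
      = (fun y => y + (-x₀)) ⁻¹' (LinearMap.ker (innerSL ℝ a).toLinearMap : Set (EuclideanSpace ℝ (Fin n))) := by
    ext x
    simp only [Set.mem_setOf_eq, Set.mem_preimage, SetLike.mem_coe, LinearMap.mem_ker,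
      ContinuousLinearMap.coe_coe, innerSL_apply_apply, inner_add_right, inner_neg_right, hx₀]
    rw [real_inner_comm a x]
    constructor
    · intro h; rw [h]; ring
    · intro h; linarith
  rw [hset, measure_preimage_add_right]
  apply Measure.addHaar_submodule
  intro htop
  have : a ∈ LinearMap.ker (innerSL ℝ a).toLinearMap := htop ▸ Submodule.mem_top
  simp only [LinearMap.mem_ker, ContinuousLinearMap.coe_coe, innerSL_apply_apply] at this
  exact hAA this

variable {k : ℕ}

/-- The union of slabs of half-width `δ` around the cell boundaries. -/
def slab (p : Fin k → EuclideanSpace ℝ (Fin n)) (h : Fin k → ℝ) (δ : ℝ) :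
    Set (EuclideanSpace ℝ (Fin n)) :=
  ⋃ i, ⋃ j, ⋃ (_ : i ≠ j), {x | |⟪x, p i⟫ - ⟪x, p j⟫ + (h i - h j)| ≤ δ}

lemma slab_closed (p : Fin k → EuclideanSpace ℝ (Fin n)) (h : Fin k → ℝ) (δ : ℝ) :
    IsClosed (slab p h δ) := by
  apply isClosed_iUnion_of_finite; intro i
  apply isClosed_iUnion_of_finite; intro j
  apply isClosed_iUnion_of_finite; intro _
  exact isClosed_le (((continuous_id.inner continuous_const).sub
    (continuous_id.inner continuous_const)).add continuous_const).abs continuous_const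

lemma slab_meas (p : Fin k → EuclideanSpace ℝ (Fin n)) (h : Fin k → ℝ) (δ : ℝ) :
    MeasurableSet (slab p h δ) := (slab_closed p h δ).measurableSet

lemma slab_mono (p : Fin k → EuclideanSpace ℝ (Fin n)) (h : Fin k → ℝ) {δ δ' : ℝ}
    (hδ : δ ≤ δ') : slab p h δ ⊆ slab p h δ' := by
  intro x hx
  simp only [slab, Set.mem_iUnion, Set.mem_setOf_eq] at hx ⊢
  obtain ⟨i, j, hij, hx⟩ := hx
  exact ⟨i, j, hij, hx.trans hδ⟩

lemma slab_zero_null (p : Fin k → EuclideanSpace ℝ (Fin n)) (hp : Function.Injective p)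
    (h : Fin k → ℝ) : volume (slab p h 0) = 0 := by
  apply measure_iUnion_null; intro i
  apply measure_iUnion_null; intro j
  apply measure_iUnion_null; intro hij
  have : {x : EuclideanSpace ℝ (Fin n) | |⟪x, p i⟫ - ⟪x, p j⟫ + (h i - h j)| ≤ 0}
      = {x : EuclideanSpace ℝ (Fin n) | ⟪x, p i - p j⟫ = h j - h i} := by
    ext x
    simp only [Set.mem_setOf_eq, abs_nonpos_iff, inner_sub_right]
    constructor <;> intro hx <;> linarith
  rw [this]
  exact hyperplane_null _ (sub_ne_zero.2 fun hc => hij (hp hc)) _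

lemma slab_small (p : Fin k → EuclideanSpace ℝ (Fin n)) (hp : Function.Injective p)
    (h : Fin k → ℝ) (ρ : EuclideanSpace ℝ (Fin n) → ℝ) (hρ : Integrable ρ)
    (hρ0 : ∀ x, 0 ≤ ρ x) {ε : ℝ} (hε : 0 < ε) :
    ∃ δ > 0, ∫ x in slab p h δ, ρ x < ε := by
  have hmeas : ∀ δ : ℝ, MeasurableSet (slab p h δ) := slab_meas p h
  have key : Filter.Tendsto (fun m : ℕ => ∫ x, (slab p h (1 / (m + 1))).indicator ρ x)
      Filter.atTop (𝓝 (∫ x, (slab p h 0).indicator ρ x)) := by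
    apply tendsto_integral_of_dominated_convergence ρ
    · exact fun m => hρ.aestronglyMeasurable.indicator (hmeas _)
    · exact hρ
    · intro m
      filter_upwards with x
      rw [Real.norm_eq_abs, abs_of_nonneg (Set.indicator_nonneg (fun y _ => hρ0 y) x)]
      exact Set.indicator_le_self' (fun y _ => hρ0 y) x
    · filter_upwards with x
      by_cases hx : x ∈ slab p h 0
      · have heq : ∀ m : ℕ, (slab p h 0).indicator ρ x
            = (slab p h (1 / ((m : ℝ) + 1))).indicator ρ x := by
          intro m
          rw [Set.indicator_of_mem hx, Set.indicator_of_mem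
            ((slab_mono p h (show (0:ℝ) ≤ 1 / ((m:ℝ)+1) by positivity)) hx)]
        exact tendsto_const_nhds.congr heq
      · rw [Set.indicator_of_notMem hx]
        have hall : ∀ i j : Fin k, i ≠ j → 0 < |⟪x, p i⟫ - ⟪x, p j⟫ + (h i - h j)| := by
          intro i j hij
          by_contra hc
          push_neg at hc
          exact hx (Set.mem_iUnion.2 ⟨i, Set.mem_iUnion.2 ⟨j, Set.mem_iUnion.2 ⟨hij, hc⟩⟩⟩)
        have hev : ∀ᶠ m : ℕ in atTop, ∀ i j : Fin k, i ≠ j →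
            1 / ((m : ℝ) + 1) < |⟪x, p i⟫ - ⟪x, p j⟫ + (h i - h j)| := by
          rw [Filter.eventually_all]; intro i
          rw [Filter.eventually_all]; intro j
          rcases eq_or_ne i j with rfl | hij
          · filter_upwards with m hij; exact absurd rfl hij
          · filter_upwards [tendsto_one_div_add_atTop_nhds_zero_nat.eventually
              (gt_mem_nhds (hall i j hij))] with m hm _
            exact hm
        apply Filter.Tendsto.congr' _ tendsto_const_nhds
        filter_upwards [hev] with m hm
        symm
        apply Set.indicator_of_notMem
        intro hmem
        simp only [slab, Set.mem_iUnion, Set.mem_setOf_eq] at hmem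
        obtain ⟨i, j, hij, hle⟩ := hmem
        exact absurd hle (not_le.2 (hm i j hij))
  have hlim : (∫ x, (slab p h 0).indicator ρ x) = 0 := by
    rw [integral_indicator (hmeas 0)]
    exact setIntegral_measure_zero _ (slab_zero_null p hp h)
  rw [hlim] at key
  obtain ⟨m, hm⟩ := (key.eventually (gt_mem_nhds hε)).exists
  refine ⟨1 / ((m : ℝ) + 1), by positivity, ?_⟩
  rwa [integral_indicator (hmeas _)] at hm

lemma mem_slab {p : Fin k → EuclideanSpace ℝ (Fin n)} {h : Fin k → ℝ} {δ : ℝ}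
    {x : EuclideanSpace ℝ (Fin n)} :
    x ∈ slab p h δ ↔ ∃ i j, i ≠ j ∧ |⟪x, p i⟫ - ⟪x, p j⟫ + (h i - h j)| ≤ δ := by
  simp [slab]

lemma not_mem_slab {p : Fin k → EuclideanSpace ℝ (Fin n)} {h : Fin k → ℝ} {δ : ℝ}
    {x : EuclideanSpace ℝ (Fin n)} (hx : x ∉ slab p h δ) :
    ∀ i j, i ≠ j → δ < |⟪x, p i⟫ - ⟪x, p j⟫ + (h i - h j)| := by
  intro i j hij
  by_contra hc
  push_neg at hc
  exact hx (mem_slab.2 ⟨i, j, hij, hc⟩)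

/-- On the admissible set `H`, the energy `E(h) = ∫_Ω u_h σ` is `C¹` with
`∂E/∂h_i = ∫_{W_i(h) ∩ Ω} σ`. -/
theorem energy_C1_gradient (n k : ℕ) [NeZero k]
    (Ω : Set (EuclideanSpace ℝ (Fin n))) (hΩc : IsCompact Ω) (hΩconv : Convex ℝ Ω)
    (σ : EuclideanSpace ℝ (Fin n) → ℝ) (hσ : ContinuousOn σ Ω)
    (hσpos : ∀ x ∈ Ω, 0 < σ x)
    (p : Fin k → EuclideanSpace ℝ (Fin n)) (hp : Function.Injective p)
    (W : (Fin k → ℝ) → Fin k → Set (EuclideanSpace ℝ (Fin n)))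
    (hWdef : ∀ h i, W h i = {x | ∀ j, ⟪x, p j⟫ + h j ≤ ⟪x, p i⟫ + h i})
    (H : Set (Fin k → ℝ)) (hH : H = {h | ∀ i, 0 < volume (W h i ∩ Ω)})
    (E : (Fin k → ℝ) → ℝ)
    (hE : ∀ h, E h = ∫ x in Ω,
      (Finset.univ.sup' Finset.univ_nonempty (fun i => ⟪x, p i⟫ + h i)) * σ x) :
    ContDiffOn ℝ 1 E H ∧
    ∀ h ∈ H, ∀ i, fderiv ℝ E h (Pi.single i 1) = ∫ x in (W h i ∩ Ω), σ x := by
  have hΩm : MeasurableSet Ω := hΩc.isClosed.measurableSet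
  have hWclosed : ∀ h i, IsClosed (W h i) := by
    intro h i
    rw [hWdef, Set.setOf_forall]
    exact isClosed_iInter fun j => isClosed_le
      ((continuous_id.inner continuous_const).add continuous_const)
      ((continuous_id.inner continuous_const).add continuous_const)
  have hWmeas : ∀ h i, MeasurableSet (W h i) := fun h i => (hWclosed h i).measurableSet
  have hσint : IntegrableOn σ Ω := hσ.integrableOn_compact hΩc
  have habs : IntegrableOn (fun x => |σ x|) Ω := by
    have := hσint.norm; simp only [Real.norm_eq_abs] at this; exact this
  set ρ : EuclideanSpace ℝ (Fin n) → ℝ := Ω.indicator (fun y => |σ y|) with hρdef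
  have hρint : Integrable ρ := (integrable_indicator_iff hΩm).2 habs
  have hρ0 : ∀ x, 0 ≤ ρ x := fun x => Set.indicator_nonneg (fun y _ => abs_nonneg _) x
  have hucont : ∀ h' : Fin k → ℝ, Continuous (fun x : EuclideanSpace ℝ (Fin n) =>
      Finset.univ.sup' Finset.univ_nonempty (fun i => ⟪x, p i⟫ + h' i)) := by
    intro h'
    exact Continuous.finset_sup'_apply Finset.univ_nonempty
      (fun i _ => (continuous_id.inner continuous_const).add continuous_const)
  have hEint : ∀ h' : Fin k → ℝ, IntegrableOn (fun x =>
      (Finset.univ.sup' Finset.univ_nonempty (fun i => ⟪x, p i⟫ + h' i)) * σ x) Ω :=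
    fun h' => ((hucont h').continuousOn.mul hσ).integrableOn_compact hΩc
  set g : Fin k → (Fin k → ℝ) → ℝ := fun i h => ∫ x in (W h i ∩ Ω), σ x with hgdef
  set L : (Fin k → ℝ) → (Fin k → ℝ) →L[ℝ] ℝ :=
    fun h => ∑ i, (g i h) • (ContinuousLinearMap.proj i) with hLdef
  have hLapply : ∀ h v, L h v = ∑ i, g i h * v i := by
    intro h v
    simp [hLdef, ContinuousLinearMap.sum_apply, smul_eq_mul]
  have hgind : ∀ (h' : Fin k → ℝ) i, g i h' = ∫ x in Ω, (W h' i).indicator σ x := by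
    intro h' i
    rw [hgdef]
    rw [setIntegral_indicator (hWmeas h' i), Set.inter_comm]
  have hindint : ∀ (h' : Fin k → ℝ) i (c : ℝ),
      IntegrableOn (fun x => (W h' i).indicator (fun y => c * σ y) x) Ω :=
    fun h' i c => (hσint.const_mul c).indicator (hWmeas h' i)
  have hslabρ : ∀ (h₀ : Fin k → ℝ) δ,
      ∫ x in Ω, (slab p h₀ δ).indicator (fun y => |σ y|) x = ∫ x in slab p h₀ δ, ρ x := by
    intro h₀ δ
    calc ∫ x in Ω, (slab p h₀ δ).indicator (fun y => |σ y|) x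
        = ∫ x in Ω ∩ slab p h₀ δ, |σ x| := setIntegral_indicator (slab_meas p h₀ δ)
      _ = ∫ x in slab p h₀ δ ∩ Ω, |σ x| := by rw [Set.inter_comm]
      _ = ∫ x in slab p h₀ δ, ρ x := (setIntegral_indicator hΩm).symm
  have hcore : ∀ (h₀ v : Fin k → ℝ),
      ‖E (h₀ + v) - E h₀ - L h₀ v‖ ≤ 2 * ‖v‖ * ∫ x in slab p h₀ (2 * ‖v‖), ρ x := by
    intro h₀ v
    have hvm : ∀ m, |v m| ≤ ‖v‖ := by
      intro m
      simpa [Real.norm_eq_abs] using norm_le_pi_norm v m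
    set u₀ : EuclideanSpace ℝ (Fin n) → ℝ := fun x =>
      Finset.univ.sup' Finset.univ_nonempty (fun m => ⟪x, p m⟫ + h₀ m) with hu₀
    set u₁ : EuclideanSpace ℝ (Fin n) → ℝ := fun x =>
      Finset.univ.sup' Finset.univ_nonempty (fun m => ⟪x, p m⟫ + (h₀ + v) m) with hu₁
    set D : EuclideanSpace ℝ (Fin n) → ℝ := fun x =>
      u₁ x - u₀ x - ∑ m, (W h₀ m).indicator (fun _ => v m) x with hD
    have hptS : ∀ x, (∑ m, (W h₀ m).indicator (fun _ => v m) x) * σ x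
        = ∑ m, (W h₀ m).indicator (fun y => v m * σ y) x := by
      intro x
      rw [Finset.sum_mul]
      exact Finset.sum_congr rfl fun m _ => by
        by_cases hx : x ∈ W h₀ m <;> simp [hx]
    have hIsum : IntegrableOn
        (fun x => ∑ m, (W h₀ m).indicator (fun y => v m * σ y) x) Ω :=
      integrable_finset_sum _ fun m _ => hindint h₀ m (v m)
    have hI3 : IntegrableOn
        (fun x => (∑ m, (W h₀ m).indicator (fun _ => v m) x) * σ x) Ω :=
      hIsum.congr (Filter.Eventually.of_forall fun x => (hptS x).symm)
    have hsplit : E (h₀ + v) - E h₀ - L h₀ v = ∫ x in Ω, D x * σ x := by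
      have I1 : IntegrableOn (fun x => u₁ x * σ x) Ω := hEint (h₀ + v)
      have I2 : IntegrableOn (fun x => u₀ x * σ x) Ω := hEint h₀
      have I12 : IntegrableOn (fun x => u₁ x * σ x - u₀ x * σ x) Ω := I1.sub I2
      have heq : (fun x => D x * σ x) = fun x =>
          (u₁ x * σ x - u₀ x * σ x)
            - ∑ m, (W h₀ m).indicator (fun y => v m * σ y) x := by
        funext x
        rw [← hptS x, hD]
        ring
      rw [heq, integral_sub I12 hIsum, integral_sub I1 I2, integral_finset_sum _
          (fun m _ => hindint h₀ m (v m))]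
      have hterm : ∀ m, ∫ x in Ω, (W h₀ m).indicator (fun y => v m * σ y) x
          = g m h₀ * v m := by
        intro m
        rw [setIntegral_indicator (hWmeas h₀ m), Set.inter_comm,
          MeasureTheory.integral_const_mul, hgdef, mul_comm]
      simp only [hterm]
      rw [hE (h₀ + v), hE h₀, hLapply]
    have hbdd : ∀ᵐ x ∂(volume.restrict Ω), ‖D x * σ x‖
        ≤ (slab p h₀ (2 * ‖v‖)).indicator (fun y => 2 * ‖v‖ * |σ y|) x := by
      have h0 : ∀ᵐ x ∂(volume.restrict Ω), x ∉ slab p h₀ 0 :=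
        ae_restrict_of_ae (measure_eq_zero_iff_ae_notMem.1 (slab_zero_null p hp h₀))
      filter_upwards [h0] with x hx
      obtain ⟨i, -, hi⟩ := Finset.exists_mem_eq_sup' (Finset.univ_nonempty)
        (fun m => ⟪x, p m⟫ + h₀ m)
      have hlt : ∀ m, m ≠ i → ⟪x, p m⟫ + h₀ m < ⟪x, p i⟫ + h₀ i := by
        intro m hm
        have hle : ⟪x, p m⟫ + h₀ m ≤ ⟪x, p i⟫ + h₀ i := by
          rw [← hi]
          exact Finset.le_sup' (fun m => ⟪x, p m⟫ + h₀ m) (Finset.mem_univ m)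
        rcases hle.lt_or_eq with hlt | heq
        · exact hlt
        · exact absurd (mem_slab.2 ⟨m, i, hm, by rw [abs_nonpos_iff]; linarith⟩) hx
      have hWx : x ∈ W h₀ i := by
        rw [hWdef]
        intro j
        rcases eq_or_ne j i with rfl | hj
        · exact le_refl _
        · exact (hlt j hj).le
      have hu₀x : u₀ x = ⟪x, p i⟫ + h₀ i := hi
      have hsum : (∑ m, (W h₀ m).indicator (fun _ => v m) x) = v i := by
        rw [Finset.sum_eq_single i]
        · exact Set.indicator_of_mem hWx _
        · intro m _ hmi
          apply Set.indicator_of_notMem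
          rw [hWdef]
          intro hmem
          exact absurd (hmem i) (not_le.2 (hlt m hmi))
        · exact fun hni => absurd (Finset.mem_univ i) hni
      have hu₁ge : ⟪x, p i⟫ + h₀ i + v i ≤ u₁ x := by
        have := Finset.le_sup' (fun m => ⟪x, p m⟫ + (h₀ + v) m) (Finset.mem_univ i)
        rw [hu₁]
        simp only [Pi.add_apply, add_assoc] at this ⊢; exact this
      by_cases hxS : x ∈ slab p h₀ (2 * ‖v‖)
      · rw [Set.indicator_of_mem hxS, Real.norm_eq_abs, abs_mul]
        apply mul_le_mul_of_nonneg_right _ (abs_nonneg _)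
        obtain ⟨j, -, hj⟩ := Finset.exists_mem_eq_sup' (Finset.univ_nonempty)
          (fun m => ⟪x, p m⟫ + (h₀ + v) m)
        have hu₁x : u₁ x = ⟪x, p j⟫ + h₀ j + v j := by
          simp only [hu₁]
          rw [hj, Pi.add_apply]; ring
        have haj : ⟪x, p j⟫ + h₀ j ≤ ⟪x, p i⟫ + h₀ i := by
          rw [← hi]
          exact Finset.le_sup' (fun m => ⟪x, p m⟫ + h₀ m) (Finset.mem_univ j)
        have hvi := hvm i; have hvj := hvm j
        rw [abs_le] at hvi hvj ⊢
        simp only [hD]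
        rw [hsum, hu₀x, hu₁x]
        constructor <;> [linarith; linarith]
      · rw [Set.indicator_of_notMem hxS]
        have hu₁x : u₁ x = ⟪x, p i⟫ + h₀ i + v i := by
          apply le_antisymm _ hu₁ge
          simp only [hu₁]
          apply Finset.sup'_le
          intro j _
          rcases eq_or_ne j i with rfl | hj
          · rw [Pi.add_apply]; ring_nf; exact le_refl _
          · have hgap := not_mem_slab hxS j i hj
            have hlt' := hlt j hj
            have habs : ⟪x, p i⟫ + h₀ i - (⟪x, p j⟫ + h₀ j) > 2 * ‖v‖ := by
              rcases abs_cases (⟪x, p j⟫ - ⟪x, p i⟫ + (h₀ j - h₀ i)) with ⟨heq, -⟩ | ⟨heq, -⟩ <;>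
                [linarith [hvm i, abs_nonneg (v i)]; linarith]
            have hvi := hvm i; have hvj := hvm j
            rw [abs_le] at hvi hvj
            rw [Pi.add_apply]
            linarith
        simp only [hD]
        rw [hsum, hu₀x, hu₁x]
        simp
    calc ‖E (h₀ + v) - E h₀ - L h₀ v‖ = ‖∫ x in Ω, D x * σ x‖ := by rw [hsplit]
      _ ≤ ∫ x in Ω, (slab p h₀ (2 * ‖v‖)).indicator (fun y => 2 * ‖v‖ * |σ y|) x :=
          norm_integral_le_of_norm_le
            ((habs.const_mul (2 * ‖v‖)).indicator (slab_meas _ _ _)) hbdd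
      _ = 2 * ‖v‖ * ∫ x in Ω, (slab p h₀ (2 * ‖v‖)).indicator (fun y => |σ y|) x := by
          rw [← integral_const_mul]
          congr 1
          funext x
          exact Set.indicator_const_mul _ _ _ x
      _ = 2 * ‖v‖ * ∫ x in slab p h₀ (2 * ‖v‖), ρ x := by rw [hslabρ]
  have hHasF : ∀ h₀ : Fin k → ℝ, HasFDerivAt E (L h₀) h₀ := by
    intro h₀
    rw [hasFDerivAt_iff_isLittleO_nhds_zero, Asymptotics.isLittleO_iff]
    intro ε hε
    obtain ⟨δ, hδ, hδε⟩ := slab_small p hp h₀ ρ hρint hρ0 (half_pos hε)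
    have hball : ∀ᶠ v : Fin k → ℝ in 𝓝 0, ‖v‖ ≤ δ / 2 := by
      have := Metric.closedBall_mem_nhds (0 : Fin k → ℝ) (half_pos hδ)
      filter_upwards [this] with v hv
      simpa [dist_zero_right] using hv
    filter_upwards [hball] with v hv
    calc ‖E (h₀ + v) - E h₀ - L h₀ v‖
        ≤ 2 * ‖v‖ * ∫ x in slab p h₀ (2 * ‖v‖), ρ x := hcore h₀ v
      _ ≤ 2 * ‖v‖ * ∫ x in slab p h₀ δ, ρ x := by
          apply mul_le_mul_of_nonneg_left _ (by positivity)
          apply setIntegral_mono_set hρint.integrableOn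
            (Filter.Eventually.of_forall hρ0)
          exact (slab_mono p h₀ (by linarith)).eventuallyLE
      _ ≤ 2 * ‖v‖ * (ε / 2) := by
          apply mul_le_mul_of_nonneg_left hδε.le (by positivity)
      _ = ε * ‖v‖ := by ring
  have hgsub : ∀ i (h₀ h' : Fin k → ℝ),
      |g i h' - g i h₀| ≤ ∫ x in slab p h₀ (2 * ‖h' - h₀‖), ρ x := by
    intro i h₀ h'
    have hd : ∀ m, |h' m - h₀ m| ≤ ‖h' - h₀‖ := by
      intro m
      simpa [Real.norm_eq_abs] using norm_le_pi_norm (h' - h₀) m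
    have hI1 : IntegrableOn ((W h' i).indicator σ) Ω := hσint.indicator (hWmeas h' i)
    have hI0 : IntegrableOn ((W h₀ i).indicator σ) Ω := hσint.indicator (hWmeas h₀ i)
    have hsub : g i h' - g i h₀
        = ∫ x in Ω, ((W h' i).indicator σ x - (W h₀ i).indicator σ x) := by
      rw [hgind, hgind, ← integral_sub hI1 hI0]
    have hptw : ∀ x, ‖(W h' i).indicator σ x - (W h₀ i).indicator σ x‖
        ≤ (slab p h₀ (2 * ‖h' - h₀‖)).indicator (fun y => |σ y|) x := by
      intro x
      by_cases h1 : x ∈ W h' i <;> by_cases h2 : x ∈ W h₀ i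
      · rw [Set.indicator_of_mem h1, Set.indicator_of_mem h2, sub_self]
        simpa using Set.indicator_nonneg (fun y _ => abs_nonneg (σ y)) x
      · -- x ∈ W h' i, x ∉ W h₀ i
        have h2' := h2
        rw [hWdef] at h2'
        simp only [Set.mem_setOf_eq, not_forall, not_le] at h2'
        obtain ⟨j, hj⟩ := h2'
        have hij : i ≠ j := by
          intro hij; rw [hij] at hj; exact lt_irrefl _ hj
        have h1' : ⟪x, p j⟫ + h' j ≤ ⟪x, p i⟫ + h' i := by
          rw [hWdef] at h1; exact h1 j
        have hmemS : x ∈ slab p h₀ (2 * ‖h' - h₀‖) := by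
          refine mem_slab.2 ⟨i, j, hij, ?_⟩
          have hdi := hd i; have hdj := hd j
          rw [abs_le] at hdi hdj ⊢
          constructor <;> [linarith; linarith [abs_nonneg (h' i - h₀ i)]]
        rw [Set.indicator_of_mem h1, Set.indicator_of_notMem h2,
          Set.indicator_of_mem hmemS, sub_zero, Real.norm_eq_abs]
      · -- x ∉ W h' i, x ∈ W h₀ i
        have h1' := h1
        rw [hWdef] at h1'
        simp only [Set.mem_setOf_eq, not_forall, not_le] at h1'
        obtain ⟨j, hj⟩ := h1'
        have hij : i ≠ j := by
          intro hij; rw [hij] at hj; exact lt_irrefl _ hj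
        have h2' : ⟪x, p j⟫ + h₀ j ≤ ⟪x, p i⟫ + h₀ i := by
          rw [hWdef] at h2; exact h2 j
        have hmemS : x ∈ slab p h₀ (2 * ‖h' - h₀‖) := by
          refine mem_slab.2 ⟨i, j, hij, ?_⟩
          have hdi := hd i; have hdj := hd j
          rw [abs_le] at hdi hdj ⊢
          constructor <;> [linarith [abs_nonneg (h' i - h₀ i)]; linarith]
        rw [Set.indicator_of_notMem h1, Set.indicator_of_mem h2,
          Set.indicator_of_mem hmemS, zero_sub, Real.norm_eq_abs, abs_neg]
      · rw [Set.indicator_of_notMem h1, Set.indicator_of_notMem h2, sub_self]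
        simpa using Set.indicator_nonneg (fun y _ => abs_nonneg (σ y)) x
    rw [← Real.norm_eq_abs, hsub]
    calc ‖∫ x in Ω, ((W h' i).indicator σ x - (W h₀ i).indicator σ x)‖
        ≤ ∫ x in Ω, (slab p h₀ (2 * ‖h' - h₀‖)).indicator (fun y => |σ y|) x :=
          norm_integral_le_of_norm_le (habs.indicator (slab_meas _ _ _))
            (Filter.Eventually.of_forall hptw)
      _ = ∫ x in slab p h₀ (2 * ‖h' - h₀‖), ρ x := hslabρ _ _
  have hgcont : ∀ i, Continuous (g i) := by
    intro i
    rw [continuous_iff_continuousAt]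
    intro h₀
    rw [Metric.continuousAt_iff]
    intro ε hε
    obtain ⟨δ, hδ, hδε⟩ := slab_small p hp h₀ ρ hρint hρ0 (half_pos hε)
    refine ⟨δ / 2, half_pos hδ, fun {h'} hd => ?_⟩
    rw [Real.dist_eq]
    calc |g i h' - g i h₀| ≤ ∫ x in slab p h₀ (2 * ‖h' - h₀‖), ρ x := hgsub i h₀ h'
      _ ≤ ∫ x in slab p h₀ δ, ρ x := by
          apply setIntegral_mono_set hρint.integrableOn (Filter.Eventually.of_forall hρ0)
          apply (slab_mono p h₀ _).eventuallyLE
          rw [dist_eq_norm] at hd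
          linarith
      _ < ε / 2 := hδε
      _ < ε := by linarith
  have hLcont : Continuous L := by
    apply continuous_finset_sum
    intro i _
    exact (hgcont i).smul continuous_const
  have hfderiv : fderiv ℝ E = L := funext fun h₀ => (hHasF h₀).fderiv
  constructor
  · apply ContDiff.contDiffOn
    rw [contDiff_one_iff_fderiv]
    exact ⟨fun h₀ => (hHasF h₀).differentiableAt, by rw [hfderiv]; exact hLcont⟩
  · intro h hmem i
    rw [hfderiv, hLapply]
    rw [Finset.sum_eq_single i]
    · simp [hgdef]
    · intro m _ hmi
      simp [Pi.single_eq_of_ne hmi]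
    · intro hni
      exact absurd (Finset.mem_univ i) hni
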